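/- Let $0<p_1<p_2<\cdots<p_n<1$ and $k\in\{1,\dots,n\}$, and let $r^\ast$ be as in the generalized Boole–Fréchet upper bound (the largest $r\in\{1,\dots,k-1\}$ with $p_{n-r+1}\geq\frac{1}{k-r+1}\sum_{i=1}^{n-r+1}p_i$, else $0$). Then there exists a probability space and events $A_1,\dots,A_n$ with $\mathbb{P}(A_i)=p_i$ such that $\mathbb{P}(\text{at least } k \text{ of the } A_i \text{ occur}) = \min\{\frac{1}{k-r^\ast}\sum_{i=1}^{n-r^\ast}p_i,\,1\}$, i.e. the bound is sharp. -/

import Mathlib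

open MeasureTheory Finset
open scoped Classical

namespace S3

noncomputable def PS (p : ℕ → ℝ) (i : ℕ) : ℝ := ∑ t ∈ Finset.Icc 1 i, p t

lemma PS_zero (p : ℕ → ℝ) : PS p 0 = 0 := by simp [PS]

lemma PS_succ (p : ℕ → ℝ) (i : ℕ) : PS p (i + 1) = PS p i + p (i + 1) := by
  unfold PS
  rw [Finset.sum_Icc_succ_top (by omega : 1 ≤ i + 1)]

lemma PS_pred (p : ℕ → ℝ) (i : ℕ) (hi : 1 ≤ i) : PS p i = PS p (i - 1) + p i := by
  obtain ⟨j, rfl⟩ : ∃ j, i = j + 1 := ⟨i - 1, by omega⟩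
  simpa using PS_succ p j

lemma PS_nonneg (p : ℕ → ℝ) (M i : ℕ) (h : ∀ t ∈ Finset.Icc 1 M, 0 ≤ p t)
    (hiM : i ≤ M) : 0 ≤ PS p i := by
  apply Finset.sum_nonneg
  intro t ht
  exact h t (Finset.mem_Icc.mpr ⟨(Finset.mem_Icc.mp ht).1, le_trans (Finset.mem_Icc.mp ht).2 hiM⟩)

lemma PS_mono (p : ℕ → ℝ) (M : ℕ) (h : ∀ t ∈ Finset.Icc 1 M, 0 ≤ p t)
    {i j : ℕ} (hij : i ≤ j) (hjM : j ≤ M) : PS p i ≤ PS p j := by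
  apply Finset.sum_le_sum_of_subset_of_nonneg (Finset.Icc_subset_Icc_right hij)
  intro t ht _
  exact h t (Finset.mem_Icc.mpr ⟨(Finset.mem_Icc.mp ht).1, le_trans (Finset.mem_Icc.mp ht).2 hjM⟩)

lemma exists_idx (p : ℕ → ℝ) : ∀ (M : ℕ), (∀ t ∈ Finset.Icc 1 M, 0 < p t) →
    ∀ y : ℝ, 0 ≤ y → y < PS p M →
      ∃ i, i ∈ Finset.Icc 1 M ∧ PS p (i - 1) ≤ y ∧ y < PS p i := by
  intro M
  induction M with
  | zero =>
    intro _ y hy0 hyM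
    rw [PS_zero] at hyM; linarith
  | succ M ih =>
    intro hpos y hy0 hyM
    by_cases hc : y < PS p M
    · obtain ⟨i, hi, h1, h2⟩ := ih (fun t ht => hpos t (by
        simp only [Finset.mem_Icc] at ht ⊢; omega)) y hy0 hc
      simp only [Finset.mem_Icc] at hi
      exact ⟨i, Finset.mem_Icc.mpr ⟨hi.1, by omega⟩, h1, h2⟩
    · exact ⟨M + 1, Finset.mem_Icc.mpr ⟨by omega, le_rfl⟩, by simpa using not_lt.mp hc, hyM⟩

lemma idx_unique (p : ℕ → ℝ) (M : ℕ) (hpos : ∀ t ∈ Finset.Icc 1 M, 0 ≤ p t)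
    {y : ℝ} {i i' : ℕ} (hi : i ∈ Finset.Icc 1 M) (hi' : i' ∈ Finset.Icc 1 M)
    (h1 : PS p (i - 1) ≤ y) (h2 : y < PS p i)
    (h1' : PS p (i' - 1) ≤ y) (h2' : y < PS p i') : i = i' := by
  simp only [Finset.mem_Icc] at hi hi'
  by_contra hne
  rcases Nat.lt_or_ge i i' with h | h
  · have : PS p i ≤ PS p (i' - 1) := PS_mono p M hpos (by omega) (by omega)
    linarith
  · have hlt : i' < i := by omega
    have : PS p i' ≤ PS p (i - 1) := PS_mono p M hpos (by omega) (by omega)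
    linarith

/-- The wrapped interval `[a, b)` on a circle of circumference `C`, realized in `[0, C)`. -/
def wrap (a b C : ℝ) : Set ℝ :=
  {x | 0 ≤ x ∧ x < C ∧ ∃ j : ℕ, a ≤ x + j * C ∧ x + j * C < b}

lemma wrap_subset (a b C : ℝ) : wrap a b C ⊆ Set.Ico 0 C := fun x hx => ⟨hx.1, hx.2.1⟩

lemma wrap_eq (a b C : ℝ) (hC : 0 < C) (J : ℕ) (hb : b ≤ J * C) :
    wrap a b C = ⋃ j ∈ Finset.range J,
      Set.Ico (max (a - j * C) 0) (min (b - j * C) C) := by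
  ext x
  simp only [wrap, Set.mem_setOf_eq, Set.mem_iUnion, Set.mem_Ico, Finset.mem_range]
  constructor
  · rintro ⟨hx0, hxC, j, hj1, hj2⟩
    have hjJ : j < J := by
      by_contra hjJ
      have : (J : ℝ) * C ≤ j * C := by
        apply mul_le_mul_of_nonneg_right _ hC.le
        exact_mod_cast not_lt.mp hjJ
      nlinarith
    refine ⟨j, hjJ, ?_, ?_⟩
    · exact max_le (by linarith) hx0
    · exact lt_min_iff.mpr ⟨by linarith, hxC⟩
  · rintro ⟨j, hjJ, h1, h2⟩
    have h1a : a - j * C ≤ x := le_trans (le_max_left _ _) h1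
    have h1b : (0:ℝ) ≤ x := le_trans (le_max_right _ _) h1
    have h2a : x < b - j * C := lt_of_lt_of_le h2 (min_le_left _ _)
    have h2b : x < C := lt_of_lt_of_le h2 (min_le_right _ _)
    exact ⟨h1b, h2b, j, by linarith, by linarith⟩

lemma wrap_measurable (a b C : ℝ) (hC : 0 < C) (J : ℕ) (hb : b ≤ J * C) :
    MeasurableSet (wrap a b C) := by
  rw [wrap_eq a b C hC J hb]
  exact Finset.measurableSet_biUnion _ (fun j _ => measurableSet_Ico)

lemma block_disjoint (C : ℝ) (hC : 0 < C) {j j' : ℕ} (hne : j ≠ j') :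
    Disjoint (Set.Ico ((j : ℝ) * C) ((j + 1) * C)) (Set.Ico ((j' : ℝ) * C) ((j' + 1) * C)) := by
  rw [Set.Ico_disjoint_Ico]
  rcases Nat.lt_or_ge j j' with h | h
  · have : ((j : ℝ) + 1) * C ≤ j' * C := by
      apply mul_le_mul_of_nonneg_right _ hC.le
      exact_mod_cast h
    calc min (((j:ℝ)+1)*C) (((j':ℝ)+1)*C) ≤ ((j:ℝ)+1)*C := min_le_left _ _
      _ ≤ (j':ℝ)*C := this
      _ ≤ max ((j:ℝ)*C) ((j':ℝ)*C) := le_max_right _ _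
  · have hlt : j' < j := by omega
    have : ((j' : ℝ) + 1) * C ≤ j * C := by
      apply mul_le_mul_of_nonneg_right _ hC.le
      exact_mod_cast hlt
    calc min (((j:ℝ)+1)*C) (((j':ℝ)+1)*C) ≤ ((j':ℝ)+1)*C := min_le_right _ _
      _ ≤ (j:ℝ)*C := this
      _ ≤ max ((j:ℝ)*C) ((j':ℝ)*C) := le_max_left _ _

lemma vol_Ico_blocks (C : ℝ) (hC : 0 < C) (J : ℕ) {a b : ℝ} (ha : 0 ≤ a) (hb : b ≤ J * C) :
    volume (Set.Ico a b) =
      ∑ j ∈ Finset.range J, volume (Set.Ico a b ∩ Set.Ico ((j : ℝ) * C) ((j + 1) * C)) := by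
  have hun : Set.Ico a b = ⋃ j ∈ Finset.range J,
      (Set.Ico a b ∩ Set.Ico ((j : ℝ) * C) ((j + 1) * C)) := by
    ext x
    simp only [Set.mem_iUnion, Set.mem_inter_iff, Set.mem_Ico, Finset.mem_range]
    constructor
    · rintro ⟨h1, h2⟩
      have hx0 : 0 ≤ x := le_trans ha h1
      set j := ⌊x / C⌋₊ with hj
      have hj1 : (j : ℝ) ≤ x / C := Nat.floor_le (div_nonneg hx0 hC.le)
      have hj2 : x / C < j + 1 := Nat.lt_floor_add_one _
      have hjC : (j : ℝ) * C ≤ x := (le_div_iff₀ hC).mp hj1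
      have hxjC : x < ((j : ℝ) + 1) * C := (div_lt_iff₀ hC).mp hj2
      have hjJ : j < J := by
        by_contra hcon
        have : (J : ℝ) * C ≤ (j : ℝ) * C :=
          mul_le_mul_of_nonneg_right (by exact_mod_cast not_lt.mp hcon) hC.le
        nlinarith
      exact ⟨j, hjJ, ⟨h1, h2⟩, hjC, hxjC⟩
    · rintro ⟨j, _, h, _⟩; exact h
  conv_lhs => rw [hun]
  rw [measure_biUnion_finset]
  · intro j _ j' _ hne
    exact Disjoint.mono Set.inter_subset_right Set.inter_subset_right
      (block_disjoint C hC hne)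
  · intro j _
    exact measurableSet_Ico.inter measurableSet_Ico

lemma vol_wrap (a b C : ℝ) (hC : 0 < C) (h0a : 0 ≤ a) (hab : a ≤ b) (hlen : b - a ≤ C)
    (J : ℕ) (hb : b ≤ J * C) :
    volume (wrap a b C) = ENNReal.ofReal (b - a) := by
  rw [wrap_eq a b C hC J hb]
  rw [measure_biUnion_finset]
  · have key : ∀ j ∈ Finset.range J,
        volume (Set.Ico (max (a - (j:ℝ) * C) 0) (min (b - (j:ℝ) * C) C))
          = volume (Set.Ico a b ∩ Set.Ico ((j : ℝ) * C) ((j + 1) * C)) := by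
      intro j _
      rw [Set.Ico_inter_Ico, Real.volume_Ico, Real.volume_Ico]
      congr 1
      have h1 : min (b - (j:ℝ)*C) C = min b (((j:ℝ)+1)*C) - (j:ℝ)*C := by
        rw [← min_sub_sub_right]; congr 1; ring
      have h2 : max (a - (j:ℝ)*C) 0 = max a ((j:ℝ)*C) - (j:ℝ)*C := by
        rw [← max_sub_sub_right]; congr 1; ring
      rw [h1, h2]; ring
    rw [Finset.sum_congr rfl key, ← vol_Ico_blocks C hC J h0a hb, Real.volume_Ico]
  · intro j hj j' hj' hne
    dsimp only [Function.onFun]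
    rw [Set.disjoint_left]
    intro x hx hx'
    have h1a : a - (j:ℝ) * C ≤ x := le_trans (le_max_left _ _) hx.1
    have h2a : x < b - (j:ℝ) * C := lt_of_lt_of_le hx.2 (min_le_left _ _)
    have h1a' : a - (j':ℝ) * C ≤ x := le_trans (le_max_left _ _) hx'.1
    have h2a' : x < b - (j':ℝ) * C := lt_of_lt_of_le hx'.2 (min_le_left _ _)
    rcases Nat.lt_or_ge j j' with h | h
    · have hjj : (j : ℝ) + 1 ≤ j' := by exact_mod_cast h
      nlinarith
    · have hlt : j' < j := by omega
      have hjj : (j' : ℝ) + 1 ≤ j := by exact_mod_cast hlt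
      nlinarith
  · intro j _
    exact measurableSet_Ico

lemma card_le_of (p : ℕ → ℝ) (M : ℕ) (C : ℝ) (t : ℕ) (hC : 0 < C)
    (hpos0 : ∀ i ∈ Finset.Icc 1 M, 0 ≤ p i) (hM : PS p M ≤ t * C) (x : ℝ) :
    ((Finset.Icc 1 M).filter (fun i => x ∈ wrap (PS p (i - 1)) (PS p i) C)).card ≤ t := by
  classical
  rw [← Finset.card_range t]
  apply Finset.card_le_card_of_injOn
    (f := fun i => if h : ∃ j : ℕ, PS p (i - 1) ≤ x + j * C ∧ x + j * C < PS p i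
      then Nat.find h else 0)
  · intro i hi
    simp only [Finset.mem_coe] at hi ⊢
    rw [Finset.mem_filter] at hi
    obtain ⟨hiM, hx0, hxC, hex⟩ := hi
    rw [dif_pos hex, Finset.mem_range]
    obtain ⟨hj1, hj2⟩ := Nat.find_spec hex
    set j := Nat.find hex with hjdef
    have h1 : PS p i ≤ PS p M :=
      PS_mono p M hpos0 (Finset.mem_Icc.mp hiM).2 le_rfl
    have h2 : (j : ℝ) * C < (t : ℝ) * C := by linarith
    have h3 : (j : ℝ) < (t : ℝ) := lt_of_mul_lt_mul_right h2 hC.le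
    exact_mod_cast h3
  · intro i hi i' hi' hfi
    simp only [Finset.coe_filter, Set.mem_setOf_eq] at hi hi'
    obtain ⟨hiM, hx0, hxC, hex⟩ := hi
    obtain ⟨hiM', _, _, hex'⟩ := hi'
    simp only at hfi
    rw [dif_pos hex, dif_pos hex'] at hfi
    obtain ⟨hj1, hj2⟩ := Nat.find_spec hex
    obtain ⟨hj1', hj2'⟩ := Nat.find_spec hex'
    rw [hfi] at hj1 hj2
    exact idx_unique p M hpos0 hiM hiM' hj1 hj2 hj1' hj2'

lemma card_ge_of (p : ℕ → ℝ) (M : ℕ) (C : ℝ) (t : ℕ) (hC : 0 < C)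
    (hpos : ∀ i ∈ Finset.Icc 1 M, 0 < p i) (hlen : ∀ i ∈ Finset.Icc 1 M, p i ≤ C)
    (x : ℝ) (hx0 : 0 ≤ x) (hxC : x < C) (hcov : ∀ j : ℕ, j < t → x + j * C < PS p M) :
    t ≤ ((Finset.Icc 1 M).filter (fun i => x ∈ wrap (PS p (i - 1)) (PS p i) C)).card := by
  classical
  have key : ∀ j : ℕ, j < t →
      ∃ i, i ∈ Finset.Icc 1 M ∧ PS p (i - 1) ≤ x + j * C ∧ x + j * C < PS p i := by
    intro j hj
    apply exists_idx p M hpos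
    · have : (0:ℝ) ≤ (j : ℝ) * C := mul_nonneg (Nat.cast_nonneg j) hC.le
      linarith
    · exact hcov j hj
  rw [← Finset.card_range t]
  apply Finset.card_le_card_of_injOn (f := fun j => if h : j < t then (key j h).choose else 0)
  · intro j hj
    simp only [Finset.mem_coe] at hj ⊢
    rw [Finset.mem_range] at hj
    rw [dif_pos hj]
    obtain ⟨hmem, h1, h2⟩ := (key j hj).choose_spec
    rw [Finset.mem_filter]
    exact ⟨hmem, hx0, hxC, j, h1, h2⟩
  · intro j hj j' hj' hg
    simp only [Finset.coe_range, Set.mem_Iio] at hj hj'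
    simp only at hg
    rw [dif_pos hj, dif_pos hj'] at hg
    obtain ⟨hmem, h1, h2⟩ := (key j hj).choose_spec
    obtain ⟨hmem', h1', h2'⟩ := (key j' hj').choose_spec
    rw [hg] at hmem h1 h2
    set i := (key j' hj').choose with hidef
    have hi1 : 1 ≤ i := (Finset.mem_Icc.mp hmem').1
    have hpC : p i ≤ C := hlen i hmem'
    have hPS : PS p i = PS p (i - 1) + p i := PS_pred p i hi1
    by_contra hne
    rcases Nat.lt_or_ge j j' with h | h
    · have hjj : (j : ℝ) + 1 ≤ j' := by exact_mod_cast h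
      nlinarith
    · have hlt : j' < j := by omega
      have hjj : (j' : ℝ) + 1 ≤ j := by exact_mod_cast hlt
      nlinarith

end S3

theorem stmt_3
    (n : ℕ) (p : ℕ → ℝ)
    (hp0 : ∀ i ∈ Finset.Icc 1 n, 0 < p i) (hp1 : ∀ i ∈ Finset.Icc 1 n, p i < 1)
    (hmono : ∀ i, 1 ≤ i → i < n → p i < p (i + 1))
    (k : ℕ) (hk1 : 1 ≤ k) (hkn : k ≤ n)
    (rs : ℕ)
    (hrs : rs = 0 ∨ (1 ≤ rs ∧ rs ≤ k - 1 ∧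
      p (n - rs + 1) ≥ (∑ i ∈ Finset.Icc 1 (n - rs + 1), p i) / (k - rs + 1)))
    (hrsmax : ∀ r, 1 ≤ r → r ≤ k - 1 →
      p (n - r + 1) ≥ (∑ i ∈ Finset.Icc 1 (n - r + 1), p i) / (k - r + 1) → r ≤ rs) :
    ∃ (Ω : Type) (_ : MeasurableSpace Ω) (μ : Measure Ω) (_ : IsProbabilityMeasure μ)
      (A : ℕ → Set Ω),
      (∀ i ∈ Finset.Icc 1 n, MeasurableSet (A i)) ∧
      (∀ i ∈ Finset.Icc 1 n, (μ (A i)).toReal = p i) ∧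
      (μ {ω | k ≤ ((Finset.Icc 1 n).filter (fun i => ω ∈ A i)).card}).toReal =
        min ((∑ i ∈ Finset.Icc 1 (n - rs), p i) / (k - rs)) 1 := by
  have hrsk : rs < k := by
    rcases hrs with h | ⟨h1, h2, _⟩ <;> omega
  set m := n - rs with hm
  set κ := k - rs with hκ
  have hm1 : 1 ≤ m := by omega
  have hmn : m ≤ n := by omega
  have hκ1 : 1 ≤ κ := by omega
  have hκcast : (κ : ℝ) = (k : ℝ) - (rs : ℝ) := by
    rw [hκ]; push_cast [Nat.cast_sub hrsk.le]; ring
  have hpos0 : ∀ i ∈ Finset.Icc 1 n, 0 ≤ p i := fun i hi => (hp0 i hi).le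
  have hmono' : ∀ j, j ≤ n → ∀ i, 1 ≤ i → i ≤ j → p i ≤ p j := by
    intro j
    induction j with
    | zero => intro _ i h1 h2; omega
    | succ j ih =>
      intro hjn i h1 h2
      rcases Nat.eq_or_lt_of_le h2 with rfl | h
      · exact le_rfl
      · have hij : i ≤ j := by omega
        have h1' : p i ≤ p j := ih (by omega) i h1 hij
        have h2' : p j < p (j + 1) := hmono j (by omega) (by omega)
        linarith
  set c := S3.PS p m / (κ : ℝ) with hc
  have hSm_pos : 0 < S3.PS p m := by
    apply Finset.sum_pos
    · intro t ht
      exact hp0 t (Finset.mem_Icc.mpr ⟨(Finset.mem_Icc.mp ht).1,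
        le_trans (Finset.mem_Icc.mp ht).2 hmn⟩)
    · exact ⟨1, Finset.mem_Icc.mpr ⟨le_rfl, hm1⟩⟩
  have hκR : (0 : ℝ) < (κ : ℝ) := by exact_mod_cast hκ1
  have hc0 : 0 < c := div_pos hSm_pos hκR
  have hSmκc : S3.PS p m = (κ : ℝ) * c := by
    rw [hc]; field_simp
  have hPSm : (∑ i ∈ Finset.Icc 1 m, p i) = S3.PS p m := rfl
  -- p m ≤ c
  have hpm_le_c : p m ≤ c := by
    rcases Nat.eq_or_lt_of_le hκ1 with hκeq | hκgt
    · -- κ = 1, c = PS p m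
      have hc1 : c = S3.PS p m := by rw [hc, ← hκeq]; simp
      have := S3.PS_pred p m hm1
      have h0 : 0 ≤ S3.PS p (m - 1) := S3.PS_nonneg p n (m - 1) hpos0 (by omega)
      rw [hc1]; linarith
    · -- κ ≥ 2, use maximality at rs + 1
      by_contra hcon
      push_neg at hcon
      have hmm : n - (rs + 1) + 1 = m := by omega
      have habs : p (n - (rs + 1) + 1) ≥
          (∑ i ∈ Finset.Icc 1 (n - (rs + 1) + 1), p i) / ((k : ℝ) - ((rs : ℕ) + 1 : ℕ) + 1) := by
        rw [hmm]
        have hden : ((k : ℝ) - ((rs : ℕ) + 1 : ℕ) + 1) = (κ : ℝ) := by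
          push_cast; rw [hκcast]; ring
        rw [hden, hPSm, ← hc]
        exact hcon.le
      have := hrsmax (rs + 1) (by omega) (by omega) habs
      omega
  have hbase : ∀ i ∈ Finset.Icc 1 m, p i ≤ c := by
    intro i hi
    rw [Finset.mem_Icc] at hi
    exact le_trans (hmono' m hmn i hi.1 hi.2) hpm_le_c
  have htopc : rs ≠ 0 → c ≤ p (m + 1) := by
    intro hrs0
    rcases hrs with h | ⟨h1, h2, h3⟩
    · omega
    · have hmm : n - rs + 1 = m + 1 := rfl
      rw [hmm] at h3
      have hden : (0 : ℝ) < (k : ℝ) - (rs : ℝ) + 1 := by rw [← hκcast]; linarith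
      rw [ge_iff_le, div_le_iff₀ hden] at h3
      have hPS1 : (∑ i ∈ Finset.Icc 1 (m + 1), p i) = S3.PS p m + p (m + 1) :=
        S3.PS_succ p m
      rw [hPS1, ← hκcast] at h3
      rw [hc, div_le_iff₀ hκR]
      nlinarith
  -- probability measure on ℝ
  have hprob : IsProbabilityMeasure (volume.restrict (Set.Ico (0:ℝ) 1)) := by
    constructor
    rw [Measure.restrict_apply_univ, Real.volume_Ico]
    norm_num
  by_cases hc1 : c ≤ 1
  · -- Case 1 : the bound is c
    set A : ℕ → Set ℝ := fun i =>
      if i ≤ m then S3.wrap (S3.PS p (i - 1)) (S3.PS p i) c else Set.Ico 0 (p i) with hA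
    have hwrapJ : ∀ i, i ≤ m → S3.PS p i ≤ (κ : ℝ) * c := by
      intro i hi
      rw [← hSmκc]
      exact S3.PS_mono p n hpos0 hi hmn
    have hmeas : ∀ i ∈ Finset.Icc 1 n, MeasurableSet (A i) := by
      intro i hi
      simp only [hA]
      by_cases h : i ≤ m
      · rw [if_pos h]
        exact S3.wrap_measurable _ _ _ hc0 κ (hwrapJ i h)
      · rw [if_neg h]
        exact measurableSet_Ico
    have hmarg : ∀ i ∈ Finset.Icc 1 n, ((volume.restrict (Set.Ico (0:ℝ) 1)) (A i)).toReal = p i := by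
      intro i hi
      have hi' := Finset.mem_Icc.mp hi
      rw [Measure.restrict_apply (hmeas i hi)]
      by_cases h : i ≤ m
      · have hAi : A i = S3.wrap (S3.PS p (i - 1)) (S3.PS p i) c := by
          simp only [hA, if_pos h]
        rw [hAi, Set.inter_eq_left.mpr
          (subset_trans (S3.wrap_subset _ _ _) (Set.Ico_subset_Ico le_rfl hc1))]
        have ha0 : 0 ≤ S3.PS p (i - 1) := S3.PS_nonneg p n _ hpos0 (by omega)
        have hab : S3.PS p (i - 1) ≤ S3.PS p i := S3.PS_mono p n hpos0 (by omega) hi'.2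
        have hpi : S3.PS p i - S3.PS p (i - 1) = p i := by
          have := S3.PS_pred p i hi'.1; linarith
        rw [S3.vol_wrap _ _ _ hc0 ha0 hab
          (by rw [hpi]; exact hbase i (Finset.mem_Icc.mpr ⟨hi'.1, h⟩)) κ (hwrapJ i h),
          hpi, ENNReal.toReal_ofReal (hpos0 i hi)]
      · have hAi : A i = Set.Ico 0 (p i) := by simp only [hA, if_neg h]
        rw [hAi, Set.inter_eq_left.mpr (Set.Ico_subset_Ico le_rfl (hp1 i hi).le),
          Real.volume_Ico, sub_zero, ENNReal.toReal_ofReal (hpos0 i hi)]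
    have hcount : ∀ x : ℝ, 0 ≤ x → x < c →
        ((Finset.Icc 1 n).filter (fun i => x ∈ A i)).card = k := by
      intro x hx0 hxc
      have hsplit : Finset.Icc 1 n = Finset.Icc 1 m ∪ Finset.Ioc m n := by
        ext i
        simp only [Finset.mem_union, Finset.mem_Icc, Finset.mem_Ioc]
        omega
      have hdisj : Disjoint (Finset.Icc 1 m) (Finset.Ioc m n) := by
        rw [Finset.disjoint_left]
        intro i hi hi'
        rw [Finset.mem_Icc] at hi
        rw [Finset.mem_Ioc] at hi'
        omega
      rw [hsplit, Finset.filter_union,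
        Finset.card_union_of_disjoint (Finset.disjoint_filter_filter hdisj)]
      have h1 : Finset.filter (fun i => x ∈ A i) (Finset.Icc 1 m)
          = Finset.filter (fun i => x ∈ S3.wrap (S3.PS p (i - 1)) (S3.PS p i) c)
            (Finset.Icc 1 m) := by
        apply Finset.filter_congr
        intro i hi
        rw [Finset.mem_Icc] at hi
        simp only [hA, if_pos hi.2]
      have hposm : ∀ i ∈ Finset.Icc 1 m, 0 ≤ p i := by
        intro i hi
        rw [Finset.mem_Icc] at hi
        exact hpos0 i (Finset.mem_Icc.mpr ⟨hi.1, le_trans hi.2 hmn⟩)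
      have hposm' : ∀ i ∈ Finset.Icc 1 m, 0 < p i := by
        intro i hi
        rw [Finset.mem_Icc] at hi
        exact hp0 i (Finset.mem_Icc.mpr ⟨hi.1, le_trans hi.2 hmn⟩)
      have hcov : ∀ j : ℕ, j < κ → x + j * c < S3.PS p m := by
        intro j hj
        have hjκ : (j : ℝ) + 1 ≤ (κ : ℝ) := by exact_mod_cast hj
        rw [hSmκc]
        nlinarith
      have hcard1 : (Finset.filter
          (fun i => x ∈ S3.wrap (S3.PS p (i - 1)) (S3.PS p i) c) (Finset.Icc 1 m)).card = κ :=
        le_antisymm (S3.card_le_of p m c κ hc0 hposm (le_of_eq hSmκc) x)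
          (S3.card_ge_of p m c κ hc0 hposm' hbase x hx0 hxc hcov)
      have h2 : Finset.filter (fun i => x ∈ A i) (Finset.Ioc m n) = Finset.Ioc m n := by
        apply Finset.filter_true_of_mem
        intro i hi
        rw [Finset.mem_Ioc] at hi
        have hrsne : rs ≠ 0 := by omega
        have hc_le : c ≤ p i :=
          le_trans (htopc hrsne) (hmono' i hi.2 (m + 1) (by omega) hi.1)
        simp only [hA, if_neg (by omega : ¬ i ≤ m)]
        exact ⟨hx0, lt_of_lt_of_le hxc hc_le⟩
      rw [h1, hcard1, h2, Nat.card_Ioc]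
      omega
    have hout : ∀ x : ℝ, x ∉ Set.Ico (0:ℝ) c →
        ((Finset.Icc 1 n).filter (fun i => x ∈ A i)).card < k := by
      intro x hx
      have hsub : (Finset.Icc 1 n).filter (fun i => x ∈ A i) ⊆ Finset.Ioc m n := by
        intro i hi
        rw [Finset.mem_filter, Finset.mem_Icc] at hi
        rw [Finset.mem_Ioc]
        by_contra hcon
        have him : i ≤ m := by omega
        have hxw : x ∈ S3.wrap (S3.PS p (i - 1)) (S3.PS p i) c := by
          have := hi.2
          simpa only [hA, if_pos him] using this
        exact hx (S3.wrap_subset _ _ _ hxw)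
      calc ((Finset.Icc 1 n).filter (fun i => x ∈ A i)).card
          ≤ (Finset.Ioc m n).card := Finset.card_le_card hsub
        _ = n - m := Nat.card_Ioc m n
        _ < k := by omega
    have hset : {ω : ℝ | k ≤ ((Finset.Icc 1 n).filter (fun i => ω ∈ A i)).card}
        = Set.Ico (0:ℝ) c := by
      ext x
      simp only [Set.mem_setOf_eq]
      constructor
      · intro hk'
        by_contra hx
        exact absurd hk' (not_le.mpr (hout x hx))
      · intro hx
        rw [hcount x hx.1 hx.2]
    refine ⟨ℝ, inferInstance, volume.restrict (Set.Ico 0 1), hprob, A, hmeas, hmarg, ?_⟩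
    rw [hset, Measure.restrict_apply measurableSet_Ico,
      Set.inter_eq_left.mpr (Set.Ico_subset_Ico le_rfl hc1), Real.volume_Ico,
      sub_zero, ENNReal.toReal_ofReal hc0.le]
    have hrw : (∑ i ∈ Finset.Icc 1 m, p i) / ((k:ℝ) - (rs:ℝ)) = c := by
      rw [hPSm, ← hκcast, ← hc]
    rw [hrw, min_eq_left hc1]
  · -- Case 2 : the bound is 1, and necessarily rs = 0
    have hrs0 : rs = 0 := by
      by_contra h
      have h1 := htopc h
      have h2 : p (m + 1) < 1 := hp1 (m + 1) (Finset.mem_Icc.mpr ⟨by omega, by omega⟩)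
      have h3 : (1:ℝ) < c := not_le.mp hc1
      linarith
    have hmn' : m = n := by omega
    have hκk : κ = k := by omega
    set A : ℕ → Set ℝ := fun i => S3.wrap (S3.PS p (i - 1)) (S3.PS p i) 1 with hA
    have hJ : ∀ i, i ≤ n → S3.PS p i ≤ (n : ℝ) * 1 := by
      intro i hi
      have h1 : S3.PS p i ≤ S3.PS p n := S3.PS_mono p n hpos0 hi le_rfl
      have h2 : S3.PS p n ≤ (n : ℝ) := by
        calc S3.PS p n ≤ ∑ i ∈ Finset.Icc 1 n, (1:ℝ) :=
              Finset.sum_le_sum (fun i hi => (hp1 i hi).le)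
          _ = (n : ℝ) := by simp [Nat.card_Icc]
      linarith
    have hmeas : ∀ i ∈ Finset.Icc 1 n, MeasurableSet (A i) := by
      intro i hi
      simp only [hA]
      exact S3.wrap_measurable _ _ _ one_pos n (hJ i (Finset.mem_Icc.mp hi).2)
    have hmarg : ∀ i ∈ Finset.Icc 1 n, ((volume.restrict (Set.Ico (0:ℝ) 1)) (A i)).toReal = p i := by
      intro i hi
      have hi' := Finset.mem_Icc.mp hi
      rw [Measure.restrict_apply (hmeas i hi)]
      simp only [hA]
      rw [Set.inter_eq_left.mpr (S3.wrap_subset _ _ _)]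
      have ha0 : 0 ≤ S3.PS p (i - 1) := S3.PS_nonneg p n _ hpos0 (by omega)
      have hab : S3.PS p (i - 1) ≤ S3.PS p i := S3.PS_mono p n hpos0 (by omega) hi'.2
      have hpi : S3.PS p i - S3.PS p (i - 1) = p i := by
        have := S3.PS_pred p i hi'.1; linarith
      rw [S3.vol_wrap _ _ _ one_pos ha0 hab
        (by rw [hpi]; exact (hp1 i hi).le) n (hJ i hi'.2),
        hpi, ENNReal.toReal_ofReal (hpos0 i hi)]
    have hPSnk : (k : ℝ) < S3.PS p n := by
      have h1c : (1:ℝ) < c := not_le.mp hc1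
      have hPSn : S3.PS p n = (κ : ℝ) * c := by rw [← hmn']; exact hSmκc
      have hkR : (0:ℝ) < (k : ℝ) := by exact_mod_cast hk1
      rw [hPSn, hκcast, hrs0]
      push_cast
      nlinarith
    have hset : {ω : ℝ | k ≤ ((Finset.Icc 1 n).filter (fun i => ω ∈ A i)).card}
        = Set.Ico (0:ℝ) 1 := by
      ext x
      simp only [Set.mem_setOf_eq, Set.mem_Ico]
      constructor
      · intro hk'
        by_contra hx
        have hempty : (Finset.Icc 1 n).filter (fun i => x ∈ A i) = ∅ := by
          rw [Finset.filter_eq_empty_iff]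
          intro i hi hxA
          simp only [hA] at hxA
          exact hx ⟨hxA.1, hxA.2.1⟩
        rw [hempty] at hk'
        simp at hk'
        omega
      · intro hx
        have hcov : ∀ j : ℕ, j < k → x + j * 1 < S3.PS p n := by
          intro j hj
          have hjk : (j : ℝ) + 1 ≤ (k : ℝ) := by exact_mod_cast hj
          nlinarith [hx.2]
        have hge := S3.card_ge_of p n 1 k one_pos hp0 (fun i hi => (hp1 i hi).le)
          x hx.1 hx.2 hcov
        simpa only [hA] using hge
    refine ⟨ℝ, inferInstance, volume.restrict (Set.Ico 0 1), hprob, A, hmeas, hmarg, ?_⟩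
    rw [hset, Measure.restrict_apply measurableSet_Ico, Set.inter_self, Real.volume_Ico,
      sub_zero, ENNReal.toReal_ofReal (by norm_num : (0:ℝ) ≤ 1)]
    have hrw : (∑ i ∈ Finset.Icc 1 m, p i) / ((k:ℝ) - (rs:ℝ)) = c := by
      rw [hPSm, ← hκcast, ← hc]
    rw [hrw, min_eq_right (not_le.mp hc1).le]
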